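/- In the Gaussian thresholding model with intercepts, the covariance between the imputed perturbation p̂ᵢ and the response mᵢ equals β₁ᵐ π (ω − E[p̂ᵢ]), and Var(p̂ᵢ) = E[p̂ᵢ](1 − E[p̂ᵢ]), where E[p̂ᵢ] = ζ(1−π) + ωπ, ω = Φ(β₁ᵍ + β₀ᵍ − c), ζ = Φ(β₀ᵍ − c). -/

import Mathlib

open MeasureTheory ProbabilityTheory

/-- Standard normal CDF. -/
noncomputable def Phi (x : ℝ) : ℝ := ((gaussianReal 0 1) (Set.Iic x)).toReal

lemma aux_gauss_neg : (gaussianReal 0 1).map (fun x : ℝ => -x) = gaussianReal 0 1 := by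
  have h := gaussianReal_map_const_mul (μ := 0) (v := 1) (-1)
  have h2 : (⟨(-1 : ℝ)^2, sq_nonneg _⟩ : NNReal) * 1 = 1 := by
    ext; norm_num
  rw [mul_zero] at h; erw [h2] at h
  refine Eq.trans ?_ h
  congr 1
  ext x
  ring

lemma aux_gauss_Ici (a : ℝ) : ((gaussianReal 0 1) (Set.Ici a)).toReal = Phi (-a) := by
  have h : (gaussianReal 0 1) (Set.Ici a) = (gaussianReal 0 1) (Set.Iic (-a)) := by
    conv_lhs => rw [← aux_gauss_neg]
    rw [Measure.map_apply measurable_neg measurableSet_Ici]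
    congr 1
    ext x
    simp [le_neg]
  rw [h]; rfl

lemma aux_integrable_dirac {f : ℝ → ℝ} (hf : Measurable f) (a : ℝ) :
    Integrable f (Measure.dirac a) := by
  refine ⟨hf.aestronglyMeasurable, ?_⟩
  rw [HasFiniteIntegral, lintegral_dirac' _ (by measurability)]
  exact ENNReal.coe_lt_top

lemma aux_integrable_id_gauss : Integrable (fun x : ℝ => x) (gaussianReal 0 1) := by
  rw [gaussianReal_of_var_ne_zero _ one_ne_zero, integrable_withDensity_iff
    (measurable_gaussianPDF 0 1) (ae_of_all _ fun x => ENNReal.ofReal_lt_top)]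
  have h : Integrable (fun x : ℝ => x ^ (1 : ℝ) * Real.exp (-(2⁻¹ : ℝ) * x ^ 2)) :=
    integrable_rpow_mul_exp_neg_mul_sq (by norm_num) (by norm_num)
  simp only [Real.rpow_one] at h
  have := (h.const_mul ((Real.sqrt (2 * Real.pi * 1))⁻¹))
  refine this.congr ?_
  refine ae_of_all _ fun x => ?_
  simp only [gaussianPDF, gaussianPDFReal]
  rw [ENNReal.toReal_ofReal (by positivity)]
  push_cast
  ring_nf

lemma aux_ind (t : ℝ) :
    ∫ y, (if t ≤ y then (1:ℝ) else 0) ∂(gaussianReal 0 1)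
      = ((gaussianReal 0 1) (Set.Ici t)).toReal := by
  have h : (fun y : ℝ => if t ≤ y then (1:ℝ) else 0) = (Set.Ici t).indicator 1 := by
    ext y; simp [Set.indicator_apply, Set.mem_Ici]
  rw [h, integral_indicator_one measurableSet_Ici]; rfl

/-- In the Gaussian thresholding model with intercepts, m = β₀ᵐ + β₁ᵐp + ε,
g = β₀ᵍ + β₁ᵍp + τ, p ~ Bernoulli(π), ε, τ ~ N(0,1), all mutually independent,
with p̂ = 𝟙(g ≥ c): Cov(p̂, m) = β₁ᵐπ(ω − E[p̂]) and Var(p̂) = E[p̂](1 − E[p̂]),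
where E[p̂] = ζ(1−π) + ωπ, ω = Φ(β₁ᵍ + β₀ᵍ − c), ζ = Φ(β₀ᵍ − c). -/
theorem stmt_9 {Ω : Type*} [MeasurableSpace Ω] (μ : Measure Ω) [IsProbabilityMeasure μ]
    (p ε τ : Ω → ℝ) (β0m β1m β0g β1g c π : ℝ) (hπ : π ∈ Set.Ioo (0:ℝ) 1)
    (hmp : Measurable p) (hme : Measurable ε) (hmt : Measurable τ)
    (hp : μ.map p =
      ENNReal.ofReal (1 - π) • Measure.dirac (0:ℝ) + ENNReal.ofReal π • Measure.dirac (1:ℝ))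
    (he : μ.map ε = gaussianReal 0 1)
    (ht : μ.map τ = gaussianReal 0 1)
    (hindep : iIndepFun ![p, ε, τ] μ) :
    let phat : Ω → ℝ := fun ω => if c ≤ β0g + β1g * p ω + τ ω then 1 else 0
    let m : Ω → ℝ := fun ω => β0m + β1m * p ω + ε ω
    let w : ℝ := Phi (β1g + β0g - c)
    let z : ℝ := Phi (β0g - c)
    let Ep : ℝ := z * (1 - π) + w * π
    ((∫ ω, phat ω * m ω ∂μ) - (∫ ω, phat ω ∂μ) * (∫ ω, m ω ∂μ) =
        β1m * π * (w - Ep)) ∧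
      variance phat μ = Ep * (1 - Ep) := by
  intro phat m w z Ep
  obtain ⟨hπ0, hπ1⟩ := hπ
  have hπ0' : (0:ℝ) ≤ 1 - π := by linarith
  set γ : Measure ℝ := gaussianReal 0 1 with hγ
  set ν : Measure ℝ := μ.map p with hν
  haveI hνprob : IsProbabilityMeasure ν := Measure.isProbabilityMeasure_map hmp.aemeasurable
  -- Bernoulli helper lemmas
  have hbern_int : ∀ g : ℝ → ℝ, Measurable g → Integrable g ν := by
    intro g hg
    rw [hp]
    exact ((aux_integrable_dirac hg 0).smul_measure ENNReal.ofReal_ne_top).add_measure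
      ((aux_integrable_dirac hg 1).smul_measure ENNReal.ofReal_ne_top)
  have hbern_eval : ∀ g : ℝ → ℝ, StronglyMeasurable g →
      ∫ x, g x ∂ν = (1 - π) * g 0 + π * g 1 := by
    intro g hg
    rw [hp, integral_add_measure
        ((aux_integrable_dirac hg.measurable 0).smul_measure ENNReal.ofReal_ne_top)
        ((aux_integrable_dirac hg.measurable 1).smul_measure ENNReal.ofReal_ne_top),
      integral_smul_measure, integral_smul_measure, integral_dirac' _ _ hg,
      integral_dirac' _ _ hg, ENNReal.toReal_ofReal hπ0', ENNReal.toReal_ofReal hπ0.le,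
      smul_eq_mul, smul_eq_mul]
  -- joint law
  have hpτ : IndepFun p τ μ := hindep.indepFun (show (0 : Fin 3) ≠ 2 by decide)
  have hmap : μ.map (fun ω => (p ω, τ ω)) = ν.prod γ := by
    have h := (indepFun_iff_map_prod_eq_prod_map_map hmp.aemeasurable hmt.aemeasurable).mp hpτ
    rw [h, ht]
  -- the threshold function
  set F : ℝ × ℝ → ℝ := fun q => if c ≤ β0g + β1g * q.1 + q.2 then 1 else 0 with hF
  have hsF : MeasurableSet {q : ℝ × ℝ | c ≤ β0g + β1g * q.1 + q.2} :=
    measurableSet_le measurable_const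
      (((measurable_fst.const_mul β1g).const_add β0g).add measurable_snd)
  have hFmeas : Measurable F := Measurable.ite hsF measurable_const measurable_const
  have hFbound : ∀ q, ‖F q‖ ≤ 1 := by
    intro q
    by_cases h : c ≤ β0g + β1g * q.1 + q.2 <;> simp [hF, h]
  have hFint : Integrable F (ν.prod γ) :=
    Integrable.mono' (integrable_const 1) hFmeas.aestronglyMeasurable (ae_of_all _ hFbound)
  set F2 : ℝ × ℝ → ℝ := fun q => F q * q.1 with hF2
  have hF2meas : Measurable F2 := hFmeas.mul measurable_fst
  have hF2int : Integrable F2 (ν.prod γ) := by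
    refine Integrable.mono' (((hbern_int (fun x => |x|) measurable_abs).mul_prod
      (integrable_const 1) : Integrable (fun q : ℝ × ℝ => |q.1| * 1) (ν.prod γ)))
      hF2meas.aestronglyMeasurable (ae_of_all _ fun q => ?_)
    calc ‖F2 q‖ = ‖F q‖ * |q.1| := by rw [hF2]; simp [abs_mul]
    _ ≤ 1 * |q.1| := by gcongr; exact hFbound q
    _ = |q.1| * 1 := by ring
  -- the key transfer lemma
  have hkey : ∀ G : ℝ × ℝ → ℝ, Measurable G → Integrable G (ν.prod γ) →
      ∫ ω, G (p ω, τ ω) ∂μ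
        = (1 - π) * (∫ y, G (0, y) ∂γ) + π * (∫ y, G (1, y) ∂γ) := by
    intro G hGm hGi
    rw [← integral_map (hmp.prodMk hmt).aemeasurable hGm.aestronglyMeasurable, hmap,
      integral_prod _ hGi]
    exact hbern_eval _ hGm.stronglyMeasurable.integral_prod_right'
  -- inner integral of F
  have hinner : ∀ x : ℝ, ∫ y, F (x, y) ∂γ = Phi (β0g + β1g * x - c) := by
    intro x
    have hfun : (fun y => F (x, y)) = fun y => if c - β0g - β1g * x ≤ y then (1:ℝ) else 0 := by
      funext y
      simp only [hF]
      congr 1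
      exact propext ⟨fun h => by linarith, fun h => by linarith⟩
    rw [hfun, hγ, aux_ind, aux_gauss_Ici]
    congr 1
    ring
  -- E[phat]
  have hEphat : ∫ ω, phat ω ∂μ = Ep := by
    have h := hkey F hFmeas hFint
    rw [hinner 0, hinner 1] at h
    have e0 : β0g + β1g * 0 - c = β0g - c := by ring
    have e1 : β0g + β1g * 1 - c = β1g + β0g - c := by ring
    rw [e0, e1] at h
    rw [show (fun ω => phat ω) = fun ω => F (p ω, τ ω) from rfl] at h ⊢
    rw [h]
    show (1 - π) * z + π * w = Ep
    simp only [Ep]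
    ring
  -- E[phat * p]
  have hEphatp : ∫ ω, phat ω * p ω ∂μ = π * w := by
    have h := hkey F2 hF2meas hF2int
    have h2 : ∀ x : ℝ, ∫ y, F2 (x, y) ∂γ = Phi (β0g + β1g * x - c) * x := by
      intro x
      rw [show (fun y => F2 (x, y)) = fun y => F (x, y) * x from rfl, integral_mul_const,
        hinner x]
    rw [h2 0, h2 1] at h
    have e1 : β0g + β1g * 1 - c = β1g + β0g - c := by ring
    rw [e1] at h
    rw [show (fun ω => phat ω * p ω) = fun ω => F2 (p ω, τ ω) from rfl, h]
    show (1 - π) * (Phi (β0g + β1g * 0 - c) * 0) + π * (w * 1) = π * w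
    ring
  -- measurability and integrability
  have hphatm : Measurable phat := hFmeas.comp (hmp.prodMk hmt)
  have hphbound : ∀ᵐ ω ∂μ, ‖phat ω‖ ≤ 1 := ae_of_all _ fun ω => hFbound (p ω, τ ω)
  have hphint : Integrable phat μ :=
    Integrable.mono' (integrable_const 1) hphatm.aestronglyMeasurable hphbound
  have hp_int : Integrable p μ := by
    have h : Integrable (fun x : ℝ => x) ν := hbern_int _ measurable_id
    exact (integrable_map_measure stronglyMeasurable_id.aestronglyMeasurable
      hmp.aemeasurable).mp h
  have he_int : Integrable ε μ := by
    have h : Integrable (fun x : ℝ => x) (μ.map ε) := by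
      rw [he]; exact aux_integrable_id_gauss
    exact (integrable_map_measure stronglyMeasurable_id.aestronglyMeasurable
      hme.aemeasurable).mp h
  have hphatp_int : Integrable (fun ω => phat ω * p ω) μ := by
    have h := (integrable_map_measure hF2meas.stronglyMeasurable.aestronglyMeasurable
      (hmp.prodMk hmt).aemeasurable).mp (by rw [hmap]; exact hF2int)
    exact h
  have hphate_int : Integrable (fun ω => phat ω * ε ω) μ := by
    refine Integrable.mono' he_int.norm (hphatm.mul hme).aestronglyMeasurable
      (ae_of_all _ fun ω => ?_)
    calc ‖phat ω * ε ω‖ = ‖phat ω‖ * ‖ε ω‖ := norm_mul _ _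
    _ ≤ 1 * ‖ε ω‖ := by gcongr; exact hFbound (p ω, τ ω)
    _ = ‖ε ω‖ := one_mul _
  -- independence of phat and ε
  have hmeas3 : ∀ i, Measurable (![p, ε, τ] i) := by
    intro i; fin_cases i <;> assumption
  have hindep_phe : IndepFun phat ε μ := by
    have h := (hindep.indepFun_prodMk hmeas3 0 2 1 (by decide) (by decide)).comp
      hFmeas measurable_id
    exact h
  have hphate_val : ∫ ω, phat ω * ε ω ∂μ = (∫ ω, phat ω ∂μ) * ∫ ω, ε ω ∂μ :=
    hindep_phe.integral_mul_eq_mul_integral hphatm.aestronglyMeasurable hme.aestronglyMeasurable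
  -- E[p]
  have hEp_val : ∫ ω, p ω ∂μ = π := by
    have h := hbern_eval id stronglyMeasurable_id
    rw [hν, integral_map hmp.aemeasurable stronglyMeasurable_id.aestronglyMeasurable] at h
    simpa using h
  -- E[m]
  have hEm : ∫ ω, m ω ∂μ = β0m + β1m * π + ∫ ω, ε ω ∂μ := by
    have h1 : Integrable (fun ω => β0m + β1m * p ω) μ :=
      (integrable_const β0m).add (hp_int.const_mul β1m)
    rw [show (fun ω => m ω) = fun ω => (β0m + β1m * p ω) + ε ω from rfl,
      integral_add h1 he_int,
      integral_add (integrable_const β0m) (hp_int.const_mul β1m), integral_const,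
      integral_const_mul, hEp_val]
    simp
  -- E[phat * m]
  have hEphatm : ∫ ω, phat ω * m ω ∂μ
      = β0m * Ep + β1m * (π * w) + Ep * ∫ ω, ε ω ∂μ := by
    have hsplit : (fun ω => phat ω * m ω)
        = fun ω => (β0m * phat ω + β1m * (phat ω * p ω)) + phat ω * ε ω := by
      funext ω; show phat ω * (β0m + β1m * p ω + ε ω) = _; ring
    have h1 : Integrable (fun ω => β0m * phat ω + β1m * (phat ω * p ω)) μ :=
      (hphint.const_mul β0m).add (hphatp_int.const_mul β1m)
    rw [hsplit, integral_add h1 hphate_int,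
      integral_add (hphint.const_mul β0m) (hphatp_int.const_mul β1m),
      integral_const_mul, integral_const_mul, hEphat, hEphatp, hphate_val, hEphat]
  constructor
  · rw [hEphatm, hEphat, hEm]
    ring
  · have hmem : MemLp phat 2 μ :=
      (memLp_top_of_bound hphatm.aestronglyMeasurable 1 hphbound).mono_exponent le_top
    rw [variance_eq_sub hmem]
    have hsq : ∫ ω, (phat ^ 2) ω ∂μ = Ep := by
      rw [show (fun ω => (phat ^ 2) ω) = fun ω => phat ω from ?_, hEphat]
      funext ω
      show phat ω ^ 2 = phat ω
      by_cases h : c ≤ β0g + β1g * p ω + τ ω <;> simp [phat, h]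
    rw [show μ[phat ^ 2] = Ep from hsq, show μ[phat] = Ep from hEphat]
    ring
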